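/- Let P be a finite poset with n elements and let Q be its split. Then ldim_2(P) ≤ 2·ldim_2(Q) − 2, where ldim_2 denotes local 2-dimension (assuming ldim_2(Q) ≥ 1 and P is not a chain trivially realised). -/

import Mathlib

open Classical Finset Real
open scoped Classical

noncomputable section

/-- A monotone partial function from `P` to the `t`-element chain,
encoded as a function into `Option (Fin t)` (`none` = outside the domain). -/
def MonotonePartial {P : Type*} [PartialOrder P] {t : ℕ} (f : P → Option (Fin t)) : Prop :=
  ∀ ⦃x y : P⦄, x ≤ y → ∀ ⦃a b : Fin t⦄, f x = some a → f y = some b → a ≤ b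

/-- `f` separates the pair `(x, y)`: both are in the domain and `f x < f y`. -/
def Separates {P : Type*} {t : ℕ} (f : P → Option (Fin t)) (x y : P) : Prop :=
  ∃ a b : Fin t, f x = some a ∧ f y = some b ∧ a < b

/-- A local `t`-realiser: a set of monotone partial functions into the `t`-chain
separating every pair `x ≱ y`. -/
def IsLocalRealiser {P : Type*} [PartialOrder P] {t : ℕ}
    (L : Finset (P → Option (Fin t))) : Prop :=
  (∀ f ∈ L, MonotonePartial f) ∧ ∀ x y : P, ¬ y ≤ x → ∃ f ∈ L, Separates f x y

/-- The multiplicity of `x` in `L`: the number of members of `L` whose domain contains `x`. -/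
def mult {P : Type*} {t : ℕ} (L : Finset (P → Option (Fin t))) (x : P) : ℕ :=
  (L.filter fun f => (f x).isSome).card

/-- The local `t`-dimension: minimal possible maximum multiplicity of a local `t`-realiser. -/
def ltdim (t : ℕ) (P : Type*) [PartialOrder P] : ℕ :=
  sInf {d | ∃ L : Finset (P → Option (Fin t)), IsLocalRealiser L ∧ ∀ x, mult L x ≤ d}

/-- The split of a poset `P`: minimal copies `inl x = x'` and maximal copies `inr x = x''`,
with `x' ≤ y''` iff `x ≤ y` in `P`. -/
def Split (P : Type*) := P ⊕ P

instance {P : Type*} [DecidableEq P] : DecidableEq (Split P) :=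
  inferInstanceAs (DecidableEq (P ⊕ P))
instance {P : Type*} [Fintype P] : Fintype (Split P) :=
  inferInstanceAs (Fintype (P ⊕ P))
instance {P : Type*} [PartialOrder P] : PartialOrder (Split P) where
  le a b :=
    Sum.elim (fun x => Sum.elim (fun y => x = y) (fun y => x ≤ y) b)
      (fun x => Sum.elim (fun _ => False) (fun y => x = y) b) a
  le_refl a := by cases a <;> simp
  le_trans a b c h1 h2 := by
    cases a <;> cases b <;> cases c <;> simp_all
  le_antisymm a b h1 h2 := by
    cases a <;> cases b <;> simp_all <;> subst_vars <;> rfl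

/-- if `Q` is the split of a finite poset `P`, then
`ltdim₂ P ≤ 2·ltdim₂ Q − 2` (given `ltdim₂ Q ≥ 1`). -/
theorem ltdim_split (P : Type*) [PartialOrder P] [Fintype P]
    (hQ : 1 ≤ ltdim 2 (Split P)) :
    ltdim 2 P ≤ 2 * ltdim 2 (Split P) - 2 := by
  classical
  set d := ltdim 2 (Split P) with hd
  -- the defining set for `ltdim 2 (Split P)` is nonempty
  have hne : {n | ∃ L : Finset (Split P → Option (Fin 2)), IsLocalRealiser L ∧
      ∀ x, mult L x ≤ n}.Nonempty := by
    by_contra h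
    rw [Set.not_nonempty_iff_eq_empty] at h
    have : d = 0 := by rw [hd]; unfold ltdim; rw [h, Nat.sInf_empty]
    omega
  have hmem := Nat.sInf_mem hne
  obtain ⟨L, hLreal, hLmult⟩ := hmem
  obtain ⟨hLmono, hLsep⟩ := hLreal
  -- basic order facts on `Split P`
  have hle_lr : ∀ x y : P, x ≤ y →
      @LE.le (Split P) Preorder.toLE (Sum.inl x) (Sum.inr y) := fun x y h => h
  have hnle_rl : ∀ x y : P,
      ¬ (@LE.le (Split P) Preorder.toLE (Sum.inr x) (Sum.inl y)) := fun x y h => h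
  have fin2 : ∀ {a b : Fin 2}, a < b → a = 0 ∧ b = 1 := by decide
  -- not both f(x') = 1 and f(y'') = 0 when x ≤ y
  have hnotboth : ∀ f ∈ L, ∀ x y : P, x ≤ y →
      f (Sum.inl x) = some 1 → f (Sum.inr y) = some 0 → False := by
    intro f hf x y hxy h1 h0
    have := hLmono f hf (hle_lr x y hxy) h1 h0
    exact absurd this (by decide)
  -- the projection
  let F : (Split P → Option (Fin 2)) → (P → Option (Fin 2)) :=
    fun f x => if f (Sum.inl x) = some 1 then some 1
      else if f (Sum.inr x) = some 0 then some 0 else none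
  let L' : Finset (P → Option (Fin 2)) := L.image F
  -- monotonicity of each member of L'
  have hmono' : ∀ f ∈ L, MonotonePartial (F f) := by
    intro f hf x y hxy a b ha hb
    by_contra hab
    have hba : b < a := lt_of_not_ge hab
    obtain ⟨hb0, ha1⟩ := fin2 hba
    subst hb0; subst ha1
    -- F f x = some 1 means f (inl x) = some 1
    have hfx : f (Sum.inl x) = some 1 := by
      by_contra hc
      simp only [F, if_neg hc] at ha
      split at ha <;> simp_all
    have hfy : f (Sum.inr y) = some 0 := by
      by_cases hc : f (Sum.inl y) = some 1
      · simp only [F, if_pos hc] at hb; simp_all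
      · simp only [F, if_neg hc] at hb
        split at hb
        · next h => exact h
        · simp_all
    exact hnotboth f hf x y hxy hfx hfy
  -- separation
  have hsep' : ∀ x y : P, ¬ y ≤ x → ∃ g ∈ L', Separates g x y := by
    intro x y hxy
    have : ¬ (@LE.le (Split P) Preorder.toLE (Sum.inl y) (Sum.inr x)) := fun h => hxy h
    obtain ⟨f, hf, a, b, hfa, hfb, hab⟩ := hLsep (Sum.inr x) (Sum.inl y) this
    obtain ⟨ha0, hb1⟩ := fin2 hab
    subst ha0; subst hb1
    refine ⟨F f, Finset.mem_image_of_mem F hf, 0, 1, ?_, ?_, by decide⟩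
    · have hnl : ¬ f (Sum.inl x) = some 1 := by
        intro h; exact hnotboth f hf x x le_rfl h hfa
      simp only [F, if_neg hnl, if_pos hfa]
    · simp only [F, if_pos hfb]
  -- multiplicity bound
  have hmult' : ∀ x : P, mult L' x ≤ 2 * d - 2 := by
    intro x
    -- separator for the pair (inl x, inr x)
    obtain ⟨g, hg, a, b, hga, hgb, hab⟩ :=
      hLsep (Sum.inl x) (Sum.inr x) (hnle_rl x x)
    obtain ⟨ha0, hb1⟩ := fin2 hab
    subst ha0; subst hb1
    have hgF : (F g x) = none := by
      have h1 : ¬ g (Sum.inl x) = some 1 := by simp [hga]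
      have h2 : ¬ g (Sum.inr x) = some 0 := by simp [hgb]
      simp only [F, if_neg h1, if_neg h2]
    set B1 : Finset (Split P → Option (Fin 2)) :=
      L.filter (fun f => (f (Sum.inl x)).isSome) with hB1
    set B2 : Finset (Split P → Option (Fin 2)) :=
      L.filter (fun f => (f (Sum.inr x)).isSome) with hB2
    have hgB1 : g ∈ B1 := by simp [hB1, hg, hga]
    have hgB2 : g ∈ B2 := by simp [hB2, hg, hgb]
    set A : Finset (Split P → Option (Fin 2)) :=
      L.filter (fun f => ((F f) x).isSome) with hA
    -- mult L' x ≤ A.card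
    have step1 : mult L' x ≤ A.card := by
      have hsub : (L'.filter (fun g => (g x).isSome)) ⊆ A.image F := by
        intro h hh
        simp only [Finset.mem_filter, Finset.mem_image, L'] at hh
        obtain ⟨⟨f, hf, rfl⟩, hp⟩ := hh
        exact Finset.mem_image.2 ⟨f, Finset.mem_filter.2 ⟨hf, hp⟩, rfl⟩
      calc mult L' x ≤ (A.image F).card := Finset.card_le_card hsub
        _ ≤ A.card := Finset.card_image_le
    -- A ⊆ (B1.erase g) ∪ (B2.erase g)
    have hsub2 : A ⊆ (B1.erase g) ∪ (B2.erase g) := by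
      intro f hf
      rw [hA, Finset.mem_filter] at hf
      obtain ⟨hfL, hfS⟩ := hf
      have hfg : f ≠ g := by
        intro h; subst h; rw [hgF] at hfS; simp at hfS
      rw [Option.isSome_iff_exists] at hfS
      obtain ⟨c, hc⟩ := hfS
      simp only [F] at hc
      by_cases h1 : f (Sum.inl x) = some 1
      · exact Finset.mem_union_left _ (Finset.mem_erase.2 ⟨hfg,
          by simp [hB1, hfL, h1]⟩)
      · rw [if_neg h1] at hc
        by_cases h2 : f (Sum.inr x) = some 0
        · exact Finset.mem_union_right _ (Finset.mem_erase.2 ⟨hfg,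
            by simp [hB2, hfL, h2]⟩)
        · rw [if_neg h2] at hc; simp at hc
    have hB1d : B1.card ≤ d := hLmult (Sum.inl x)
    have hB2d : B2.card ≤ d := hLmult (Sum.inr x)
    have hB1pos : 1 ≤ B1.card := Finset.card_pos.2 ⟨g, hgB1⟩
    have hB2pos : 1 ≤ B2.card := Finset.card_pos.2 ⟨g, hgB2⟩
    have step2 : A.card ≤ (B1.card - 1) + (B2.card - 1) := by
      calc A.card ≤ ((B1.erase g) ∪ (B2.erase g)).card := Finset.card_le_card hsub2
        _ ≤ (B1.erase g).card + (B2.erase g).card := Finset.card_union_le _ _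
        _ = (B1.card - 1) + (B2.card - 1) := by
            rw [Finset.card_erase_of_mem hgB1, Finset.card_erase_of_mem hgB2]
    omega
  -- conclude
  have : (2 * d - 2) ∈ {n | ∃ L : Finset (P → Option (Fin 2)), IsLocalRealiser L ∧
      ∀ x, mult L x ≤ n} := by
    refine ⟨L', ⟨?_, hsep'⟩, hmult'⟩
    intro g hg
    obtain ⟨f, hf, rfl⟩ := Finset.mem_image.1 hg
    exact hmono' f hf
  exact Nat.sInf_le this
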